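/- arXiv:2305.15343 — 4 statements merged into one kernel-verified Lean document; each statement's English description precedes it below -/
import Mathlib

section
/- For every j ≥ 1 and m ≥ 0, writing ℓ = Σ_{i=j+1}^{j+m} g_i (with ℓ = 0 when m = 0), the covariance of x_j and x_{j+m} equals Cov(x_j, x_{j+m}) = σ² φ^{ℓ} / (1 − φ²). In particular the covariance depends on (j, m) only through the elapsed gap time ℓ, so the process (x_j) is weakly stationary. -/
open MeasureTheory ProbabilityTheory Real Finset

section irsvAux
open Filter
lemma sq_mul_exp_tendsto (b : ℝ) (hb : 0 < b) :
    Tendsto (fun x : ℝ => x * Real.exp (-b * x ^ 2)) atTop (nhds 0) := by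
  have h := rpow_mul_exp_neg_mul_sq_isLittleO_exp_neg hb 1
  have h2 : Tendsto (fun x : ℝ => Real.exp (-(1/2) * x)) atTop (nhds 0) := by
    have := Real.tendsto_exp_atBot.comp
      (tendsto_id.atBot_mul_const (by norm_num : (0:ℝ) < 1/2) |>.comp tendsto_neg_atTop_atBot)
    exact this.congr fun x => by simp [Function.comp]; ring_nf
  have := h.trans_tendsto h2
  refine this.congr' ?_
  filter_upwards [eventually_gt_atTop (0:ℝ)] with x hx
  rw [Real.rpow_one]

lemma integral_sq_exp (b : ℝ) (hb : 0 < b) :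
    ∫ x : ℝ, x ^ 2 * Real.exp (-b * x ^ 2) = (2 * b)⁻¹ * Real.sqrt (π / b) := by
  set F : ℝ → ℝ := fun y => -(2 * b)⁻¹ * (y * Real.exp (-b * y ^ 2)) with hFdef
  set F' : ℝ → ℝ := fun x => x ^ 2 * Real.exp (-b * x ^ 2) - (2 * b)⁻¹ * Real.exp (-b * x ^ 2)
    with hF'def
  have hF : ∀ x : ℝ, HasDerivAt F (F' x) x := by
    intro x
    have h1 : HasDerivAt (fun y : ℝ => -b * y ^ 2) (-b * (2 * x)) x := by
      simpa using (hasDerivAt_pow 2 x).const_mul (-b)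
    have h2 : HasDerivAt (fun y : ℝ => Real.exp (-b * y ^ 2))
        (Real.exp (-b * x ^ 2) * (-b * (2 * x))) x := (Real.hasDerivAt_exp _).comp x h1
    have h3 := (hasDerivAt_id x).mul h2
    have h4 := h3.const_mul (-(2 * b)⁻¹)
    refine h4.congr_deriv ?_
    simp only [hF'def, id]
    field_simp
    ring
  have hIexp : Integrable (fun x : ℝ => Real.exp (-b * x ^ 2)) := integrable_exp_neg_mul_sq hb
  have hI2 : Integrable (fun x : ℝ => x ^ 2 * Real.exp (-b * x ^ 2)) := by
    have h := integrable_rpow_mul_exp_neg_mul_sq hb (s := 2) (by norm_num)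
    refine h.congr (Filter.Eventually.of_forall fun x => ?_)
    simp only [Real.rpow_natCast]
    norm_num
  have hIF' : Integrable F' := (hI2.sub (hIexp.const_mul _))
  have htop : Tendsto F atTop (nhds 0) := by
    have h := (sq_mul_exp_tendsto b hb).const_mul (-(2 * b)⁻¹)
    rw [mul_zero] at h
    exact h
  have hbot : Tendsto F atBot (nhds 0) := by
    have h := (htop.comp tendsto_neg_atBot_atTop).neg
    rw [neg_zero] at h
    exact h.congr fun x => by
      simp only [Function.comp_apply, hFdef, neg_sq]
      ring
  have hup : ∫ x in Set.Ioi (0:ℝ), F' x = 0 - F 0 :=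
    integral_Ioi_of_hasDerivAt_of_tendsto (hF 0).continuousAt.continuousWithinAt
      (fun x _ => hF x) hIF'.integrableOn htop
  have hdown : ∫ x in Set.Iic (0:ℝ), F' x = F 0 - 0 :=
    integral_Iic_of_hasDerivAt_of_tendsto (hF 0).continuousAt.continuousWithinAt
      (fun x _ => hF x) hIF'.integrableOn hbot
  have hsplit : ∫ x : ℝ, F' x = 0 := by
    rw [← intervalIntegral.integral_Iic_add_Ioi hIF'.integrableOn hIF'.integrableOn, hup, hdown]
    ring
  have : (∫ x : ℝ, x ^ 2 * Real.exp (-b * x ^ 2))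
      - (2 * b)⁻¹ * ∫ x : ℝ, Real.exp (-b * x ^ 2) = 0 := by
    rw [← integral_const_mul, ← integral_sub hI2 (hIexp.const_mul _)]
    exact hsplit
  rw [integral_gaussian] at this
  linarith

lemma integrable_sq_exp (b : ℝ) (hb : 0 < b) :
    Integrable (fun x : ℝ => x ^ 2 * Real.exp (-b * x ^ 2)) := by
  have h := integrable_rpow_mul_exp_neg_mul_sq hb (s := 2) (by norm_num)
  refine h.congr (Filter.Eventually.of_forall fun x => ?_)
  simp only [Real.rpow_natCast]
  norm_num

lemma pdf_expand (v : NNReal) (x : ℝ) :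
    gaussianPDFReal 0 v x
      = (Real.sqrt (2 * π * v))⁻¹ * Real.exp (-(2 * (v:ℝ))⁻¹ * x ^ 2) := by
  rw [gaussianPDFReal]
  congr 1
  congr 1
  rw [sub_zero]
  by_cases hv : (v:ℝ) = 0
  · simp [hv]
  · field_simp

lemma integral_gaussianReal_eq (v : NNReal) (hv : v ≠ 0) (f : ℝ → ℝ) :
    ∫ x, f x ∂(gaussianReal 0 v) = ∫ x, gaussianPDFReal 0 v x * f x := by
  rw [gaussianReal_of_var_ne_zero 0 hv]
  have hpdf : (gaussianPDF 0 v)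
      = fun x => ((Real.toNNReal (gaussianPDFReal 0 v x) : NNReal) : ENNReal) := rfl
  rw [hpdf, integral_withDensity_eq_integral_smul
    ((measurable_gaussianPDFReal 0 v).real_toNNReal) f]
  refine integral_congr_ae (Filter.Eventually.of_forall fun x => ?_)
  simp [NNReal.smul_def, Real.coe_toNNReal _ (gaussianPDFReal_nonneg 0 v x)]

lemma gaussianReal_mean (v : NNReal) (hv : v ≠ 0) :
    ∫ x, x ∂(gaussianReal 0 v) = 0 := by
  rw [integral_gaussianReal_eq v hv]
  have h := integral_neg_eq_self (fun x => gaussianPDFReal 0 v x * x) (volume : Measure ℝ)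
  have heq : (fun x : ℝ => gaussianPDFReal 0 v (-x) * (-x))
      = fun x : ℝ => -(gaussianPDFReal 0 v x * x) := by
    funext x
    rw [pdf_expand, pdf_expand, neg_sq]
    ring
  rw [heq, integral_neg] at h
  linarith

lemma gaussianReal_sq (v : NNReal) (hv : v ≠ 0) :
    ∫ x, x ^ 2 ∂(gaussianReal 0 v) = v := by
  have hv0 : 0 < (v:ℝ) := by positivity
  set b : ℝ := (2 * (v:ℝ))⁻¹ with hbdef
  have hb : 0 < b := by positivity
  rw [integral_gaussianReal_eq v hv]
  have heq : (fun x : ℝ => gaussianPDFReal 0 v x * x ^ 2)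
      = fun x : ℝ => (Real.sqrt (2 * π * v))⁻¹ * (x ^ 2 * Real.exp (-b * x ^ 2)) := by
    funext x
    rw [pdf_expand]
    ring
  rw [heq, integral_const_mul, integral_sq_exp b hb]
  have h2b : (2 * b)⁻¹ = (v:ℝ) / 1 := by
    rw [hbdef]
    field_simp
  have hpb : π / b = 2 * π * v := by
    rw [hbdef]
    field_simp
  rw [h2b, hpb]
  have hs : 0 < Real.sqrt (2 * π * v) := by
    apply Real.sqrt_pos.2
    positivity
  field_simp

lemma gaussianReal_memLp2 (v : NNReal) (hv : v ≠ 0) :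
    MemLp (id : ℝ → ℝ) 2 (gaussianReal 0 v) := by
  have hv0 : 0 < (v:ℝ) := by positivity
  rw [memLp_two_iff_integrable_sq aestronglyMeasurable_id]
  rw [gaussianReal_of_var_ne_zero 0 hv]
  rw [integrable_withDensity_iff (measurable_gaussianPDF 0 v)
    (Filter.Eventually.of_forall fun x => ENNReal.ofReal_lt_top)]
  have hb : (0:ℝ) < (2 * (v:ℝ))⁻¹ := by positivity
  refine ((integrable_sq_exp _ hb).const_mul ((Real.sqrt (2 * π * v))⁻¹)).congr
    (Filter.Eventually.of_forall fun x => ?_)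
  simp only [gaussianPDF, ENNReal.toReal_ofReal (gaussianPDFReal_nonneg 0 v x), id_eq]
  rw [pdf_expand]
  ring


/-- Covariance of two real random variables: `Cov(X,Y) = E[(X - E X)(Y - E Y)]`. -/
noncomputable def cov {Ω : Type*} [MeasurableSpace Ω] (P : Measure Ω) (X Y : Ω → ℝ) : ℝ :=
  ∫ ω, (X ω - ∫ a, X a ∂P) * (Y ω - ∫ a, Y a ∂P) ∂P

variable {Ω : Type*} [MeasurableSpace Ω] (P : Measure Ω) [IsProbabilityMeasure P]

lemma integral_sub_mean {X : Ω → ℝ} (hX : Integrable X P) :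
    ∫ ω, (X ω - ∫ a, X a ∂P) ∂P = 0 := by
  rw [integral_sub hX (integrable_const _), integral_const]
  simp

lemma cov_indep {X Y : Ω → ℝ} (hXY : IndepFun X Y P) (hX : MemLp X 2 P)
    (hY : MemLp Y 2 P) : cov P X Y = 0 := by
  have hX1 : Integrable X P := hX.integrable one_le_two
  have hY1 : Integrable Y P := hY.integrable one_le_two
  have hXY' : IndepFun (fun ω => X ω - ∫ a, X a ∂P) (fun ω => Y ω - ∫ a, Y a ∂P) P :=
    hXY.comp (measurable_id.sub_const _) (measurable_id.sub_const _)
  have h := hXY'.integral_mul_eq_mul_integral (hX1.sub (integrable_const _)).aestronglyMeasurable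
    (hY1.sub (integrable_const _)).aestronglyMeasurable
  unfold cov
  have h2 : ∫ ω, (X ω - ∫ a, X a ∂P) * (Y ω - ∫ a, Y a ∂P) ∂P
      = (∫ ω, (X ω - ∫ a, X a ∂P) ∂P) * ∫ ω, (Y ω - ∫ a, Y a ∂P) ∂P := h
  rw [h2, integral_sub_mean P hX1]
  simp

lemma memLp2_product_integrable {X Y : Ω → ℝ} (hX : MemLp X 2 P) (hY : MemLp Y 2 P) :
    Integrable (fun ω => X ω * Y ω) P := by
  have h : MemLp (X • Y) 1 P := hY.smul hX
  exact memLp_one_iff_integrable.mp h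

lemma cov_sum_sum (s t : Finset ℕ) (a b : ℕ → ℝ) (Y : ℕ → Ω → ℝ)
    (hs : ∀ k ∈ s, MemLp (Y k) 2 P) (ht : ∀ l ∈ t, MemLp (Y l) 2 P) :
    cov P (fun ω => ∑ k ∈ s, a k * Y k ω) (fun ω => ∑ l ∈ t, b l * Y l ω)
      = ∑ k ∈ s, ∑ l ∈ t, a k * b l * cov P (Y k) (Y l) := by
  have hsum_int : ∀ (u : Finset ℕ) (c : ℕ → ℝ) (hu : ∀ k ∈ u, MemLp (Y k) 2 P),
      ∫ ω, (∑ k ∈ u, c k * Y k ω) ∂P = ∑ k ∈ u, c k * ∫ ω, Y k ω ∂P := by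
    intro u c hu
    rw [integral_finset_sum u (fun k hk => ((hu k hk).integrable one_le_two).const_mul (c k))]
    exact Finset.sum_congr rfl fun k hk => integral_const_mul _ _
  unfold cov
  rw [hsum_int s a hs, hsum_int t b ht]
  have hintegrand : ∀ ω, ((∑ k ∈ s, a k * Y k ω) - ∑ k ∈ s, a k * ∫ ω', Y k ω' ∂P)
      * ((∑ l ∈ t, b l * Y l ω) - ∑ l ∈ t, b l * ∫ ω', Y l ω' ∂P)
      = ∑ k ∈ s, ∑ l ∈ t, a k * b l *
          ((Y k ω - ∫ ω', Y k ω' ∂P) * (Y l ω - ∫ ω', Y l ω' ∂P)) := by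
    intro ω
    rw [← Finset.sum_sub_distrib, ← Finset.sum_sub_distrib, Finset.sum_mul_sum]
    refine Finset.sum_congr rfl fun k hk => Finset.sum_congr rfl fun l hl => ?_
    ring
  have hmul : ∀ k ∈ s, ∀ l ∈ t,
      Integrable (fun ω => (Y k ω - ∫ ω', Y k ω' ∂P) * (Y l ω - ∫ ω', Y l ω' ∂P)) P := by
    intro k hk l hl
    exact memLp2_product_integrable P ((hs k hk).sub (memLp_const _))
      ((ht l hl).sub (memLp_const _))
  calc ∫ ω, ((∑ k ∈ s, a k * Y k ω) - ∑ k ∈ s, a k * ∫ ω', Y k ω' ∂P)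
      * ((∑ l ∈ t, b l * Y l ω) - ∑ l ∈ t, b l * ∫ ω', Y l ω' ∂P) ∂P
      = ∫ ω, ∑ k ∈ s, ∑ l ∈ t, a k * b l *
          ((Y k ω - ∫ ω', Y k ω' ∂P) * (Y l ω - ∫ ω', Y l ω' ∂P)) ∂P := by
        exact integral_congr_ae (Filter.Eventually.of_forall fun ω => hintegrand ω)
    _ = ∑ k ∈ s, ∑ l ∈ t, a k * b l * cov P (Y k) (Y l) := by
        rw [integral_finset_sum s (fun k hk => ?_)]
        · refine Finset.sum_congr rfl fun k hk => ?_
          rw [integral_finset_sum t (fun l hl => ((hmul k hk l hl).const_mul _))]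
          refine Finset.sum_congr rfl fun l hl => ?_
          rw [integral_const_mul]
          rfl
        · exact integrable_finset_sum t fun l hl => (hmul k hk l hl).const_mul _

noncomputable def irsvC (φ : ℝ) (g : ℕ → ℝ) (j k : ℕ) : ℝ := φ ^ (∑ i ∈ Finset.Ioc k j, g i)

noncomputable def irsvV (σ φ : ℝ) (g : ℕ → ℝ) (k : ℕ) : ℝ :=
  if k = 1 then σ ^ 2 / (1 - φ ^ 2) else σ ^ 2 * (1 - φ ^ (2 * g k)) / (1 - φ ^ 2)

end irsvAux

/-- in the IR-SV model, for every `j ≥ 1` and `m ≥ 0`, writing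
`ℓ = ∑_{i=j+1}^{j+m} g i`, one has `Cov(x j, x (j+m)) = σ² φ^ℓ / (1 - φ²)`;
in particular the covariance depends on `(j, m)` only through `ℓ`, so the
process `x` is weakly stationary. -/
theorem irsv_autocovariance
    {Ω : Type*} [MeasurableSpace Ω] (P : Measure Ω) [IsProbabilityMeasure P]
    (μ σ φ : ℝ) (hσ : 0 < σ) (hφ0 : 0 < φ) (hφ1 : φ < 1)
    (g : ℕ → ℝ) (hg : ∀ j, 2 ≤ j → 0 < g j)
    (η : ℕ → Ω → ℝ) (hmeas : ∀ j, Measurable (η j))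
    (hindep : iIndepFun η P)
    (hlaw1 : Measure.map (η 1) P = gaussianReal 0 (σ ^ 2 / (1 - φ ^ 2)).toNNReal)
    (hlawj : ∀ j, 2 ≤ j → Measure.map (η j) P
      = gaussianReal 0 (σ ^ 2 * (1 - φ ^ (2 * g j)) / (1 - φ ^ 2)).toNNReal)
    (x : ℕ → Ω → ℝ) (hx1 : x 1 = η 1)
    (hxrec : ∀ j, 2 ≤ j → x j = fun ω => φ ^ (g j) * x (j - 1) ω + η j ω) :
    ∀ j, 1 ≤ j → ∀ m : ℕ,
      cov P (x j) (x (j + m))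
        = σ ^ 2 * φ ^ (∑ i ∈ Finset.Icc (j + 1) (j + m), g i) / (1 - φ ^ 2) := by
  have hφ2 : 0 < 1 - φ ^ 2 := by nlinarith
  -- basic facts about the η's
  have hηfact : ∀ k, 1 ≤ k → ∃ v : NNReal, v ≠ 0 ∧ (v : ℝ) = irsvV σ φ g k
      ∧ Measure.map (η k) P = gaussianReal 0 v := by
    intro k hk
    rcases eq_or_lt_of_le hk with h1 | h2
    · refine ⟨(σ ^ 2 / (1 - φ ^ 2)).toNNReal, ?_, ?_, ?_⟩
      · simp only [ne_eq, ← NNReal.coe_eq_zero]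
        rw [Real.coe_toNNReal _ (by positivity)]
        positivity
      · rw [Real.coe_toNNReal _ (by positivity), irsvV, if_pos h1.symm]
      · rw [← h1]; exact hlaw1
    · have h2 : 2 ≤ k := h2
      have hgk := hg k h2
      have hlt : φ ^ (2 * g k) < 1 :=
        Real.rpow_lt_one (le_of_lt hφ0) hφ1 (by positivity)
      have hpos : 0 < σ ^ 2 * (1 - φ ^ (2 * g k)) / (1 - φ ^ 2) := by
        apply div_pos _ hφ2
        apply mul_pos (by positivity)
        linarith
      refine ⟨(σ ^ 2 * (1 - φ ^ (2 * g k)) / (1 - φ ^ 2)).toNNReal, ?_, ?_, hlawj k h2⟩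
      · simp only [ne_eq, ← NNReal.coe_eq_zero]
        rw [Real.coe_toNNReal _ (le_of_lt hpos)]
        exact ne_of_gt hpos
      · rw [Real.coe_toNNReal _ (le_of_lt hpos), irsvV, if_neg (by omega)]
  have hηLp : ∀ k, 1 ≤ k → MemLp (η k) 2 P := by
    intro k hk
    obtain ⟨v, hv, -, hmap⟩ := hηfact k hk
    have h := gaussianReal_memLp2 v hv
    rw [← hmap] at h
    exact (memLp_map_measure_iff aestronglyMeasurable_id (hmeas k).aemeasurable).mp h
  have hηmean : ∀ k, 1 ≤ k → ∫ ω, η k ω ∂P = 0 := by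
    intro k hk
    obtain ⟨v, hv, -, hmap⟩ := hηfact k hk
    have h := gaussianReal_mean v hv
    rw [← hmap] at h
    have h2 : (∫ y : ℝ, y ∂(Measure.map (η k) P)) = ∫ ω, η k ω ∂P :=
      integral_map (hmeas k).aemeasurable measurable_id.aestronglyMeasurable
    rw [h2] at h
    exact h
  have hηvar : ∀ k, 1 ≤ k → cov P (η k) (η k) = irsvV σ φ g k := by
    intro k hk
    obtain ⟨v, hv, hvr, hmap⟩ := hηfact k hk
    have h := gaussianReal_sq v hv
    rw [← hmap] at h
    have h2 : (∫ y : ℝ, y ^ 2 ∂(Measure.map (η k) P)) = ∫ ω, (η k ω) ^ 2 ∂P :=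
      integral_map (hmeas k).aemeasurable (measurable_id.pow_const 2).aestronglyMeasurable
    rw [h2] at h
    unfold cov
    rw [hηmean k hk, ← hvr, ← h]
    refine integral_congr_ae (Filter.Eventually.of_forall fun ω => ?_)
    ring
  -- representation of x
  have hrep : ∀ j, 1 ≤ j → x j = fun ω => ∑ k ∈ Finset.Icc 1 j, irsvC φ g j k * η k ω := by
    intro j hj
    induction j, hj using Nat.le_induction with
    | base =>
      rw [hx1]
      funext ω
      rw [Finset.Icc_self, Finset.sum_singleton, irsvC, Finset.Ioc_self, Finset.sum_empty,
        Real.rpow_zero, one_mul]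
    | succ n hn ih =>
      rw [hxrec (n + 1) (by omega)]
      funext ω
      simp only [Nat.add_sub_cancel]
      rw [ih]
      rw [Finset.sum_Icc_succ_top (by omega : 1 ≤ n + 1)]
      have hlast : irsvC φ g (n + 1) (n + 1) = 1 := by
        rw [irsvC, Finset.Ioc_self, Finset.sum_empty, Real.rpow_zero]
      rw [hlast, one_mul, Finset.mul_sum]
      congr 1
      refine Finset.sum_congr rfl fun k hk => ?_
      have hkn : k ≤ n := (Finset.mem_Icc.mp hk).2
      rw [irsvC, irsvC, Finset.sum_Ioc_succ_top hkn, Real.rpow_add hφ0]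
      ring
  -- the variance sum
  have hT : ∀ j, 1 ≤ j →
      ∑ k ∈ Finset.Icc 1 j, irsvC φ g j k * irsvC φ g j k * irsvV σ φ g k
        = σ ^ 2 / (1 - φ ^ 2) := by
    intro j hj
    induction j, hj using Nat.le_induction with
    | base =>
      rw [Finset.Icc_self, Finset.sum_singleton, irsvC, Finset.Ioc_self, Finset.sum_empty,
        Real.rpow_zero, irsvV, if_pos rfl]
      ring
    | succ n hn ih =>
      rw [Finset.sum_Icc_succ_top (by omega : 1 ≤ n + 1)]
      have hlast : irsvC φ g (n + 1) (n + 1) = 1 := by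
        rw [irsvC, Finset.Ioc_self, Finset.sum_empty, Real.rpow_zero]
      have hsum : ∑ k ∈ Finset.Icc 1 n,
          irsvC φ g (n + 1) k * irsvC φ g (n + 1) k * irsvV σ φ g k
          = (φ ^ (g (n + 1)) * φ ^ (g (n + 1))) * (σ ^ 2 / (1 - φ ^ 2)) := by
        rw [← ih, Finset.mul_sum]
        refine Finset.sum_congr rfl fun k hk => ?_
        have hkn : k ≤ n := (Finset.mem_Icc.mp hk).2
        rw [irsvC, irsvC, Finset.sum_Ioc_succ_top hkn, Real.rpow_add hφ0]
        ring
      rw [hsum, hlast, one_mul, one_mul]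
      have hv : irsvV σ φ g (n + 1) = σ ^ 2 * (1 - φ ^ (2 * g (n + 1))) / (1 - φ ^ 2) := by
        rw [irsvV, if_neg (by omega)]
      have h2g : φ ^ (2 * g (n + 1)) = φ ^ (g (n + 1)) * φ ^ (g (n + 1)) := by
        rw [two_mul, Real.rpow_add hφ0]
      rw [hv, h2g]
      field_simp
      ring
  -- main computation
  intro j hj m
  have hjm : 1 ≤ j + m := le_trans hj (Nat.le_add_right j m)
  rw [hrep j hj, hrep (j + m) hjm]
  rw [cov_sum_sum P _ _ _ _ η (fun k hk => hηLp k (Finset.mem_Icc.mp hk).1)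
    (fun l hl => hηLp l (Finset.mem_Icc.mp hl).1)]
  have hdiag : ∀ k ∈ Finset.Icc 1 j,
      ∑ l ∈ Finset.Icc 1 (j + m), irsvC φ g j k * irsvC φ g (j + m) l * cov P (η k) (η l)
        = irsvC φ g j k * irsvC φ g (j + m) k * irsvV σ φ g k := by
    intro k hk
    obtain ⟨hk1, hkj⟩ := Finset.mem_Icc.mp hk
    rw [Finset.sum_eq_single_of_mem k (Finset.mem_Icc.mpr ⟨hk1, le_trans hkj (Nat.le_add_right j m)⟩)]
    · rw [hηvar k hk1]
    · intro l hl hlk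
      rw [cov_indep P (hindep.indepFun (Ne.symm hlk)) (hηLp k hk1)
        (hηLp l (Finset.mem_Icc.mp hl).1), mul_zero]
  rw [Finset.sum_congr rfl hdiag]
  have hL : ∀ k, k ≤ j → irsvC φ g (j + m) k
      = irsvC φ g j k * φ ^ (∑ i ∈ Finset.Ioc j (j + m), g i) := by
    intro k hkj
    rw [irsvC, irsvC, ← Real.rpow_add hφ0]
    congr 1
    exact (Finset.sum_Ioc_consecutive g hkj (Nat.le_add_right j m)).symm
  have hfinal : ∑ k ∈ Finset.Icc 1 j,
      irsvC φ g j k * irsvC φ g (j + m) k * irsvV σ φ g k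
      = φ ^ (∑ i ∈ Finset.Ioc j (j + m), g i) *
        ∑ k ∈ Finset.Icc 1 j, irsvC φ g j k * irsvC φ g j k * irsvV σ φ g k := by
    rw [Finset.mul_sum]
    refine Finset.sum_congr rfl fun k hk => ?_
    rw [hL k (Finset.mem_Icc.mp hk).2]
    ring
  rw [hfinal, hT j hj]
  rw [← Finset.Icc_add_one_left_eq_Ioc]
  ring
end

section
/- For every j ≥ 1 and m ≥ 0, writing ℓ = Σ_{i=j+1}^{j+m} g_i, the variance of the sum of log-volatilities satisfies Var(h_j + h_{j+m}) = 2σ²(1 + φ^{ℓ})/(1 − φ²). -/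
open MeasureTheory ProbabilityTheory Real Finset

open Filter
open scoped NNReal ENNReal

open scoped NNReal ENNReal

lemma integrable_sq_mul_exp_neg_mul_sq {b : ℝ} (hb : 0 < b) :
    Integrable (fun x : ℝ => x ^ 2 * Real.exp (-b * x ^ 2)) := by
  have := integrable_rpow_mul_exp_neg_mul_sq hb (s := 2) (by norm_num)
  refine this.congr ?_
  filter_upwards with x
  rw [show ((2:ℝ) = ((2:ℕ):ℝ)) by norm_num, Real.rpow_natCast]

lemma integral_mul_exp_neg_mul_sq {b : ℝ} (hb : 0 < b) :
    ∫ x : ℝ, x * Real.exp (-b * x ^ 2) = 0 := by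
  have h := MeasureTheory.integral_neg_eq_self (fun x : ℝ => x * Real.exp (-b * x ^ 2)) volume
  simp only [neg_neg, neg_sq, neg_mul, integral_neg] at h
  have : ∀ x : ℝ, -b * x ^ 2 = -(b * x ^ 2) := fun x => by ring
  simp only [this]
  linarith [h]

lemma integral_sq_mul_exp_neg_mul_sq {b : ℝ} (hb : 0 < b) :
    ∫ x : ℝ, x ^ 2 * Real.exp (-b * x ^ 2) = Real.sqrt (Real.pi / b) / (2 * b) := by
  -- integration by parts on Ioi 0
  have hderiv : ∀ x : ℝ, HasDerivAt (fun y : ℝ => y * Real.exp (-b * y ^ 2))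
      ((1 - 2 * b * x ^ 2) * Real.exp (-b * x ^ 2)) x := by
    intro x
    have h1 : HasDerivAt (fun y : ℝ => -b * y ^ 2) (-b * (2 * x)) x := by
      simpa using ((hasDerivAt_pow 2 x).const_mul (-b))
    have h2 := (h1.exp)
    have h3 := (hasDerivAt_id x).mul h2
    refine h3.congr_deriv ?_
    simp only [id_eq]
    ring
  have key := MeasureTheory.integral_Ioi_of_hasDerivAt_of_tendsto
    (f := fun y : ℝ => y * Real.exp (-b * y ^ 2))
    (f' := fun x : ℝ => (1 - 2 * b * x ^ 2) * Real.exp (-b * x ^ 2))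
    (a := (0:ℝ)) (m := 0)
    (by exact (Continuous.continuousWithinAt (by continuity)))
    (fun x _ => hderiv x) ?_ ?_
  · -- from key derive the value on Ioi 0, then extend to ℝ by evenness
    simp only [ne_eq, zero_mul, sub_zero] at key
    have hIoiInt : IntegrableOn (fun x : ℝ => x ^ 2 * Real.exp (-b * x ^ 2)) (Set.Ioi 0) :=
      (integrable_sq_mul_exp_neg_mul_sq hb).integrableOn
    have hIoiExp : IntegrableOn (fun x : ℝ => Real.exp (-b * x ^ 2)) (Set.Ioi 0) :=
      (integrable_exp_neg_mul_sq hb).integrableOn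
    have hsplit : ∫ x in Set.Ioi (0:ℝ), (1 - 2 * b * x ^ 2) * Real.exp (-b * x ^ 2)
        = (∫ x in Set.Ioi (0:ℝ), Real.exp (-b * x ^ 2))
          - 2 * b * ∫ x in Set.Ioi (0:ℝ), x ^ 2 * Real.exp (-b * x ^ 2) := by
      rw [← integral_const_mul, ← integral_sub hIoiExp]
      · congr 1 with x; ring
      · exact (hIoiInt.const_mul (2 * b))
    have hIoi : ∫ x in Set.Ioi (0:ℝ), x ^ 2 * Real.exp (-b * x ^ 2)
        = Real.sqrt (Real.pi / b) / (4 * b) := by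
      have hg := integral_gaussian_Ioi b
      have h2b : (0:ℝ) < 2 * b := by positivity
      have h4 : 2 * b * ∫ x in Set.Ioi (0:ℝ), x ^ 2 * Real.exp (-b * x ^ 2)
          = Real.sqrt (Real.pi / b) / 2 := by
        rw [← hg]; linarith [hsplit, key]
      field_simp at h4 ⊢
      linarith [h4]
    -- extend to ℝ
    have heven : ∫ x in Set.Iic (0:ℝ), x ^ 2 * Real.exp (-b * x ^ 2)
        = ∫ x in Set.Ioi (0:ℝ), x ^ 2 * Real.exp (-b * x ^ 2) := by
      have := integral_comp_neg_Iic (0:ℝ) (fun x : ℝ => x ^ 2 * Real.exp (-b * x ^ 2))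
      simp only [neg_zero, neg_sq] at this
      exact this.symm ▸ rfl
    rw [← intervalIntegral.integral_Iic_add_Ioi
      ((integrable_sq_mul_exp_neg_mul_sq hb).integrableOn)
      ((integrable_sq_mul_exp_neg_mul_sq hb).integrableOn), heven, hIoi]
    field_simp
    ring
  · -- integrable on Ioi
    refine ((integrable_exp_neg_mul_sq hb).sub
      ((integrable_sq_mul_exp_neg_mul_sq hb).const_mul (2*b))).integrableOn.congr_fun ?_ measurableSet_Ioi
    intro x _
    simp only [Pi.sub_apply]
    ring
  · -- tendsto at top to 0
    have ho := rpow_mul_exp_neg_mul_sq_isLittleO_exp_neg hb 1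
    have h1 : Filter.Tendsto (fun x : ℝ => -(1/2 : ℝ) * x) atTop atBot := by
      have hd : Filter.Tendsto (fun x : ℝ => x / 2) atTop atTop :=
        Filter.Tendsto.atTop_div_const (by norm_num) Filter.tendsto_id
      have h2 := tendsto_neg_atTop_atBot.comp hd
      refine h2.congr fun x => by simp [Function.comp]; ring
    have ht : Filter.Tendsto (fun x : ℝ => Real.exp (-(1/2:ℝ) * x)) atTop (nhds 0) :=
      Real.tendsto_exp_atBot.comp h1
    have := ho.tendsto_zero_of_tendsto ht
    refine this.congr' ?_
    filter_upwards with x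
    rw [Real.rpow_one]

section GaussMoments

lemma gaussianPDFReal_zero_eq {v : ℝ≥0} (x : ℝ) :
    gaussianPDFReal 0 v x = (Real.sqrt (2 * Real.pi * v))⁻¹ * Real.exp (-(2 * (v:ℝ))⁻¹ * x ^ 2) := by
  unfold gaussianPDFReal
  rw [sub_zero]
  congr 2
  ring

lemma integral_fun_gaussianReal {v : ℝ≥0} (hv : v ≠ 0) (f : ℝ → ℝ) :
    ∫ x, f x ∂(gaussianReal 0 v) = ∫ x, gaussianPDFReal 0 v x * f x := by
  rw [gaussianReal_of_var_ne_zero 0 hv]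
  have hmeas : Measurable (fun x => (gaussianPDFReal 0 v x).toNNReal) :=
    (measurable_gaussianPDFReal 0 v).real_toNNReal
  have : gaussianPDF 0 v = fun x => ((gaussianPDFReal 0 v x).toNNReal : ℝ≥0∞) := rfl
  rw [this, integral_withDensity_eq_integral_smul hmeas]
  congr 1 with x
  simp [NNReal.smul_def, Real.coe_toNNReal _ (gaussianPDFReal_nonneg 0 v x)]

lemma integrable_fun_gaussianReal {v : ℝ≥0} (hv : v ≠ 0) (f : ℝ → ℝ)
    (hf : AEStronglyMeasurable f (gaussianReal 0 v))
    (hint : Integrable (fun x => gaussianPDFReal 0 v x * f x)) :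
    Integrable f (gaussianReal 0 v) := by
  rw [gaussianReal_of_var_ne_zero 0 hv] at hf ⊢
  have hmeas : Measurable (fun x => (gaussianPDFReal 0 v x).toNNReal) :=
    (measurable_gaussianPDFReal 0 v).real_toNNReal
  have hd : (volume : Measure ℝ).withDensity (gaussianPDF 0 v)
      = (volume : Measure ℝ).withDensity (fun x => ((gaussianPDFReal 0 v x).toNNReal : ℝ≥0∞)) := rfl
  rw [hd] at hf ⊢
  rw [integrable_withDensity_iff_integrable_smul hmeas]
  refine hint.congr ?_
  filter_upwards with x
  simp [NNReal.smul_def, Real.coe_toNNReal _ (gaussianPDFReal_nonneg 0 v x)]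

lemma memℒp_two_id_gaussianReal {v : ℝ≥0} (hv : v ≠ 0) :
    MemLp (id : ℝ → ℝ) 2 (gaussianReal 0 v) := by
  have hvpos : (0:ℝ) < v := lt_of_le_of_ne v.coe_nonneg (by exact_mod_cast hv.symm)
  have hb : (0:ℝ) < (2 * (v:ℝ))⁻¹ := by positivity
  rw [memLp_two_iff_integrable_sq aestronglyMeasurable_id]
  refine integrable_fun_gaussianReal hv _ (by fun_prop) ?_
  have : Integrable (fun x : ℝ =>
      (Real.sqrt (2 * Real.pi * v))⁻¹ * (x ^ 2 * Real.exp (-(2 * (v:ℝ))⁻¹ * x ^ 2))) :=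
    (integrable_sq_mul_exp_neg_mul_sq hb).const_mul _
  refine this.congr ?_
  filter_upwards with x
  rw [gaussianPDFReal_zero_eq]
  simp only [id]
  ring

lemma integral_id_gaussianReal {v : ℝ≥0} (hv : v ≠ 0) :
    ∫ x, x ∂(gaussianReal 0 v) = 0 := by
  have hvpos : (0:ℝ) < v := lt_of_le_of_ne v.coe_nonneg (by exact_mod_cast hv.symm)
  have hb : (0:ℝ) < (2 * (v:ℝ))⁻¹ := by positivity
  rw [integral_fun_gaussianReal hv]
  have : ∫ x, gaussianPDFReal 0 v x * x
      = ∫ x : ℝ, (Real.sqrt (2 * Real.pi * v))⁻¹ * (x * Real.exp (-(2 * (v:ℝ))⁻¹ * x ^ 2)) := by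
    congr 1 with x
    rw [gaussianPDFReal_zero_eq]; ring
  rw [this, integral_const_mul, integral_mul_exp_neg_mul_sq hb, mul_zero]

lemma integral_sq_gaussianReal {v : ℝ≥0} (hv : v ≠ 0) :
    ∫ x, x ^ 2 ∂(gaussianReal 0 v) = v := by
  have hvpos : (0:ℝ) < v := lt_of_le_of_ne v.coe_nonneg (by exact_mod_cast hv.symm)
  have hb : (0:ℝ) < (2 * (v:ℝ))⁻¹ := by positivity
  rw [integral_fun_gaussianReal hv]
  have : ∫ x, gaussianPDFReal 0 v x * x ^ 2
      = ∫ x : ℝ, (Real.sqrt (2 * Real.pi * v))⁻¹ * (x ^ 2 * Real.exp (-(2 * (v:ℝ))⁻¹ * x ^ 2)) := by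
    congr 1 with x
    rw [gaussianPDFReal_zero_eq]; ring
  rw [this, integral_const_mul, integral_sq_mul_exp_neg_mul_sq hb]
  rw [show Real.pi / (2 * (v:ℝ))⁻¹ = 2 * Real.pi * v by field_simp]
  rw [show (2 * ((2:ℝ) * (v:ℝ))⁻¹) = (v:ℝ)⁻¹ by field_simp]
  have hs : (0:ℝ) < Real.sqrt (2 * Real.pi * v) := Real.sqrt_pos.mpr (by positivity)
  field_simp

lemma variance_id_gaussianReal {v : ℝ≥0} (hv : v ≠ 0) :
    variance (id : ℝ → ℝ) (gaussianReal 0 v) = v := by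
  rw [variance_eq_sub (memℒp_two_id_gaussianReal hv)]
  have h1 := integral_id_gaussianReal hv
  have h2 := integral_sq_gaussianReal hv
  simp only [Pi.pow_apply, id_eq]
  rw [h2, h1]
  ring

end GaussMoments

section Transfer

variable {Ω : Type*} [MeasurableSpace Ω] {P : Measure Ω}

lemma variance_eq_variance_map {X : Ω → ℝ} (hX : Measurable X) :
    variance X P = variance id (Measure.map X P) := by
  have hm : (Measure.map X P)[id] = P[X] :=
    integral_map hX.aemeasurable aestronglyMeasurable_id
  rw [variance, variance, evariance, evariance,
    lintegral_map (by fun_prop) hX]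
  have hm' : ∫ x : ℝ, x ∂(Measure.map X P) = P[X] := by simpa using hm
  simp only [hm', id_eq]

lemma variance_const_add [IsProbabilityMeasure P] (c : ℝ) (X : Ω → ℝ) (hX : Integrable X P) :
    variance (fun ω => c + X ω) P = variance X P := by
  have hm : P[fun ω => c + X ω] = c + P[X] := by
    rw [integral_add (integrable_const c) hX]; simp
  rw [variance, variance, evariance, evariance]
  congr 1
  refine lintegral_congr fun ω => ?_
  rw [hm]
  congr 2
  ring

end Transfer

/-- in the IR-SV model, for every `j ≥ 1` and `m ≥ 0`, writing
`ℓ = ∑_{i=j+1}^{j+m} g i`, one has `Var(h j + h (j+m)) = 2σ²(1 + φ^ℓ)/(1 - φ²)`. -/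
theorem irsv_sum_logvol_variance
    {Ω : Type*} [MeasurableSpace Ω] (P : Measure Ω) [IsProbabilityMeasure P]
    (μ σ φ : ℝ) (hσ : 0 < σ) (hφ0 : 0 < φ) (hφ1 : φ < 1)
    (g : ℕ → ℝ) (hg : ∀ j, 2 ≤ j → 0 < g j)
    (η : ℕ → Ω → ℝ) (hmeas : ∀ j, Measurable (η j))
    (hindep : iIndepFun η P)
    (hlaw1 : Measure.map (η 1) P = gaussianReal 0 (σ ^ 2 / (1 - φ ^ 2)).toNNReal)
    (hlawj : ∀ j, 2 ≤ j → Measure.map (η j) P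
      = gaussianReal 0 (σ ^ 2 * (1 - φ ^ (2 * g j)) / (1 - φ ^ 2)).toNNReal)
    (x : ℕ → Ω → ℝ) (hx1 : x 1 = η 1)
    (hxrec : ∀ j, 2 ≤ j → x j = fun ω => φ ^ (g j) * x (j - 1) ω + η j ω)
    (h : ℕ → Ω → ℝ) (hh : ∀ j, h j = fun ω => μ + x j ω) :
    ∀ j, 1 ≤ j → ∀ m : ℕ,
      variance (fun ω => h j ω + h (j + m) ω) P
        = 2 * σ ^ 2 * (1 + φ ^ (∑ i ∈ Finset.Icc (j + 1) (j + m), g i)) / (1 - φ ^ 2) := by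
  -- basic positivity facts
  have hφ2 : φ ^ 2 < 1 := by nlinarith
  have h1φ2 : (0:ℝ) < 1 - φ ^ 2 := by linarith
  -- the variance sequence
  set v : ℕ → ℝ := fun k => if k = 1 then σ ^ 2 / (1 - φ ^ 2)
    else σ ^ 2 * (1 - φ ^ (2 * g k)) / (1 - φ ^ 2) with hv_def
  have hv1 : v 1 = σ ^ 2 / (1 - φ ^ 2) := by simp [hv_def]
  have hvk : ∀ k, 2 ≤ k → v k = σ ^ 2 * (1 - φ ^ (2 * g k)) / (1 - φ ^ 2) := by
    intro k hk; simp [hv_def]; intro hk1; omega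
  have hvpos : ∀ k, 1 ≤ k → 0 < v k := by
    intro k hk
    rcases eq_or_lt_of_le hk with hk1 | hk2
    · rw [← hk1, hv1]; positivity
    · have hk2 : 2 ≤ k := hk2
      rw [hvk k hk2]
      have hexp : φ ^ (2 * g k) < 1 :=
        Real.rpow_lt_one hφ0.le hφ1 (by have := hg k hk2; positivity)
      have : 0 < 1 - φ ^ (2 * g k) := by linarith
      positivity
  have hlaw : ∀ k, 1 ≤ k → Measure.map (η k) P = gaussianReal 0 (v k).toNNReal := by
    intro k hk
    rcases eq_or_lt_of_le hk with hk1 | hk2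
    · rw [← hk1, hv1]; exact hlaw1
    · rw [hvk k hk2]; exact hlawj k hk2
  have hvne : ∀ k, 1 ≤ k → (v k).toNNReal ≠ 0 := by
    intro k hk
    simpa using (Real.toNNReal_pos.mpr (hvpos k hk)).ne'
  -- moments of the noise
  have hmem : ∀ k, 1 ≤ k → MemLp (η k) 2 P := by
    intro k hk
    have := memℒp_two_id_gaussianReal (hvne k hk)
    rw [← hlaw k hk] at this
    exact (memLp_map_measure_iff aestronglyMeasurable_id (hmeas k).aemeasurable).mp this
  have hvar : ∀ k, 1 ≤ k → variance (η k) P = v k := by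
    intro k hk
    rw [variance_eq_variance_map (hmeas k), hlaw k hk, variance_id_gaussianReal (hvne k hk),
      Real.coe_toNNReal _ (hvpos k hk).le]
  -- partial sums of gaps
  set S : ℕ → ℕ → ℝ := fun n k => ∑ i ∈ Finset.Ioc k n, g i with hS_def
  have hS_self : ∀ n, S n n = 0 := by
    intro n; simp [hS_def]
  have hS_succ : ∀ n k, k ≤ n → S (n + 1) k = S n k + g (n + 1) := by
    intro n k hkn
    simp only [hS_def]
    exact Finset.sum_Ioc_succ_top hkn g
  have hS_split : ∀ k j n, k ≤ j → j ≤ n → S n k = S j k + S n j := by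
    intro k j n hkj hjn
    simp only [hS_def]
    rw [Finset.sum_Ioc_consecutive g hkj hjn]
  -- representation of x n as a linear combination of the noises
  have hxrep : ∀ n, 1 ≤ n → x n = fun ω => ∑ k ∈ Finset.Ioc 0 n, φ ^ (S n k) * η k ω := by
    intro n hn
    induction n, hn using Nat.le_induction with
    | base =>
      funext ω
      rw [hx1]
      simp [hS_self, Nat.Ioc_succ_singleton]
    | succ n hn ih =>
      have h2 : 2 ≤ n + 1 := by omega
      rw [hxrec (n + 1) h2]
      funext ω
      simp only [Nat.add_sub_cancel, ih]
      rw [Finset.sum_Ioc_succ_top (by omega : 0 ≤ n), hS_self, Real.rpow_zero, one_mul,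
        Finset.mul_sum]
      congr 1
      refine Finset.sum_congr rfl fun k hk => ?_
      have hkn : k ≤ n := (Finset.mem_Ioc.mp hk).2
      rw [hS_succ n k hkn, Real.rpow_add hφ0]
      ring
  -- main computation
  intro j hj m
  set N := j + m with hN_def
  have hjN : j ≤ N := by omega
  have hN1 : 1 ≤ N := by omega
  set ℓ : ℝ := S N j with hℓ_def
  have hIccIoc : Finset.Icc (j + 1) (j + m) = Finset.Ioc j N := by
    rw [hN_def, Finset.Icc_add_one_left_eq_Ioc]
  rw [hIccIoc]
  -- the coefficients
  set a : ℕ → ℝ := fun k => (if k ∈ Finset.Ioc 0 j then φ ^ (S j k) else 0) + φ ^ (S N k)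
    with ha_def
  -- rewrite the sum of log-vols
  have hsum : (fun ω => h j ω + h (j + m) ω)
      = fun ω => (2 * μ) + ∑ k ∈ Finset.Ioc 0 N, a k * η k ω := by
    funext ω
    rw [hh j, hh (j + m)]
    simp only [← hN_def]
    rw [hxrep j hj, hxrep N hN1]
    simp only [ha_def, add_mul, Finset.sum_add_distrib, ite_mul, zero_mul]
    rw [Finset.sum_ite_mem, (Finset.inter_eq_right).mpr
      (Finset.Ioc_subset_Ioc le_rfl hjN)]
    ring
  rw [hsum]
  -- integrability
  have hXmem : ∀ k ∈ Finset.Ioc 0 N, MemLp (fun ω => a k * η k ω) 2 P := by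
    intro k hk
    exact (hmem k (Finset.mem_Ioc.mp hk).1).const_mul (a k)
  have hint : Integrable (fun ω => ∑ k ∈ Finset.Ioc 0 N, a k * η k ω) P := by
    refine integrable_finset_sum _ fun k hk => ?_
    exact ((hXmem k hk).integrable one_le_two)
  rw [variance_const_add _ _ hint]
  -- variance of the sum of independent variables
  have hfun : (fun ω => ∑ k ∈ Finset.Ioc 0 N, a k * η k ω)
      = ∑ k ∈ Finset.Ioc 0 N, (fun ω => a k * η k ω) := by
    funext ω; simp
  rw [hfun, ProbabilityTheory.IndepFun.variance_sum hXmem ?hpair]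
  case hpair =>
    intro i hi k hk hik
    have hbase : IndepFun (η i) (η k) P := hindep.indepFun hik
    exact hbase.comp (measurable_const_mul (a i)) (measurable_const_mul (a k))
  -- compute each variance
  have hvark : ∀ k ∈ Finset.Ioc 0 N, variance (fun ω => a k * η k ω) P = a k ^ 2 * v k := by
    intro k hk
    rw [variance_const_mul, hvar k (Finset.mem_Ioc.mp hk).1]
  rw [Finset.sum_congr rfl hvark]
  -- arithmetic part
  have hsq : ∀ t : ℝ, (φ ^ t) ^ 2 = φ ^ (2 * t) := by
    intro t; rw [sq, ← Real.rpow_add hφ0]; ring_nf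
  have hA : ∀ n, 1 ≤ n → ∑ k ∈ Finset.Ioc 0 n, (φ ^ (S n k)) ^ 2 * v k
      = σ ^ 2 / (1 - φ ^ 2) := by
    intro n hn
    induction n, hn using Nat.le_induction with
    | base => simp [Nat.Ioc_succ_singleton, hS_self, hv1]
    | succ n hn ih =>
      rw [Finset.sum_Ioc_succ_top (by omega : 0 ≤ n)]
      have hstep : ∑ k ∈ Finset.Ioc 0 n, (φ ^ (S (n + 1) k)) ^ 2 * v k
          = φ ^ (2 * g (n + 1)) * ∑ k ∈ Finset.Ioc 0 n, (φ ^ (S n k)) ^ 2 * v k := by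
        rw [Finset.mul_sum]
        refine Finset.sum_congr rfl fun k hk => ?_
        rw [hS_succ n k (Finset.mem_Ioc.mp hk).2, Real.rpow_add hφ0, mul_pow, hsq, hsq]
        ring
      rw [hstep, ih, hS_self, Real.rpow_zero, one_pow, one_mul, hvk (n + 1) (by omega)]
      field_simp
      ring
  have hB : ∀ m' : ℕ, ∑ k ∈ Finset.Ioc j (j + m'), (φ ^ (S (j + m') k)) ^ 2 * v k
      = σ ^ 2 * (1 - φ ^ (2 * S (j + m') j)) / (1 - φ ^ 2) := by
    intro m'
    induction m' with
    | zero => simp [hS_self]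
    | succ n ih =>
      have hadd : j + (n + 1) = (j + n) + 1 := by omega
      rw [hadd, Finset.sum_Ioc_succ_top (by omega : j ≤ j + n)]
      have hstep : ∑ k ∈ Finset.Ioc j (j + n), (φ ^ (S (j + n + 1) k)) ^ 2 * v k
          = φ ^ (2 * g (j + n + 1)) * ∑ k ∈ Finset.Ioc j (j + n), (φ ^ (S (j + n) k)) ^ 2 * v k := by
        rw [Finset.mul_sum]
        refine Finset.sum_congr rfl fun k hk => ?_
        rw [hS_succ (j + n) k (Finset.mem_Ioc.mp hk).2, Real.rpow_add hφ0, mul_pow, hsq, hsq]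
        ring
      rw [hstep, ih, hS_self, Real.rpow_zero, one_pow, one_mul, hvk (j + n + 1) (by omega),
        hS_succ (j + n) j (by omega)]
      rw [show (2 : ℝ) * (S (j + n) j + g (j + n + 1))
          = 2 * S (j + n) j + 2 * g (j + n + 1) by ring, Real.rpow_add hφ0]
      field_simp
      ring
  -- split the sum
  rw [← Finset.sum_Ioc_consecutive (fun k => a k ^ 2 * v k) (by omega : 0 ≤ j) hjN]
  have hpart1 : ∑ k ∈ Finset.Ioc 0 j, a k ^ 2 * v k
      = (1 + φ ^ ℓ) ^ 2 * (σ ^ 2 / (1 - φ ^ 2)) := by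
    rw [← hA j hj, Finset.mul_sum]
    refine Finset.sum_congr rfl fun k hk => ?_
    have hkj : k ≤ j := (Finset.mem_Ioc.mp hk).2
    have hak : a k = φ ^ (S j k) * (1 + φ ^ ℓ) := by
      rw [ha_def]
      simp only [if_pos hk]
      rw [hℓ_def, hS_split k j N hkj hjN, Real.rpow_add hφ0]
      ring
    rw [hak]
    ring
  have hpart2 : ∑ k ∈ Finset.Ioc j N, a k ^ 2 * v k
      = σ ^ 2 * (1 - (φ ^ ℓ) ^ 2) / (1 - φ ^ 2) := by
    have hB' := hB m
    rw [← hN_def] at hB'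
    rw [← hsq, ← hℓ_def] at hB'
    rw [← hB']
    refine Finset.sum_congr rfl fun k hk => ?_
    have hjk : j < k := (Finset.mem_Ioc.mp hk).1
    have hak : a k = φ ^ (S N k) := by
      rw [ha_def]
      simp only [Finset.mem_Ioc]
      rw [if_neg (by omega), zero_add]
    rw [hak]
  rw [hpart1, hpart2]
  have hℓrfl : (∑ i ∈ Finset.Ioc j N, g i) = ℓ := rfl
  rw [hℓrfl]
  field_simp
  ring
end

section
/- For every j ≥ 1 and m ≥ 0, writing ℓ = Σ_{i=j+1}^{j+m} g_i, the law of h_j + h_{j+m} is the Gaussian distribution N(2μ, 2σ²(1 + φ^{ℓ})/(1 − φ²)); that is, the pushforward of the underlying probability measure under h_j + h_{j+m} equals the real Gaussian measure with mean 2μ and variance 2σ²(1 + φ^{ℓ})/(1 − φ²). -/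
open MeasureTheory ProbabilityTheory Real Finset
open scoped NNReal ENNReal

private lemma my_integral_quadratic {a : ℝ} (ha : 0 < a) (b c : ℝ) :
    ∫ x : ℝ, rexp (-a * x ^ 2 + b * x + c) = Real.sqrt (π / a) * rexp (b ^ 2 / (4 * a) + c) := by
  have h : ∀ x : ℝ, -a * x ^ 2 + b * x + c
      = -a * (x - b / (2 * a)) ^ 2 + (b ^ 2 / (4 * a) + c) := by
    intro x; field_simp; ring
  simp_rw [h, Real.exp_add, integral_mul_const]
  rw [integral_sub_right_eq_self (fun x : ℝ => rexp (-a * x ^ 2)) (b / (2 * a)),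
    integral_gaussian]

private lemma my_integrable_quadratic {a : ℝ} (ha : 0 < a) (b c : ℝ) :
    Integrable (fun x : ℝ => rexp (-a * x ^ 2 + b * x + c)) := by
  have h : ∀ x : ℝ, rexp (-a * x ^ 2 + b * x + c)
      = rexp (-a * (x - b / (2 * a)) ^ 2) * rexp (b ^ 2 / (4 * a) + c) := by
    intro x; rw [← Real.exp_add]; congr 1; field_simp; ring
  simp_rw [h]
  exact ((integrable_exp_neg_mul_sq ha).comp_sub_right (b / (2 * a))).mul_const _

private lemma my_pdf_pt {v₁ v₂ : ℝ} (h₁ : 0 < v₁) (h₂ : 0 < v₂) (m₁ m₂ z t : ℝ) :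
    (√(2*π*v₁))⁻¹ * rexp (-(t-m₁)^2/(2*v₁)) *
        ((√(2*π*v₂))⁻¹ * rexp (-(z-t-m₂)^2/(2*v₂)))
      = (√(2*π*v₁))⁻¹ * (√(2*π*v₂))⁻¹ *
        rexp (-((v₁+v₂)/(2*v₁*v₂)) * t^2 + (m₁/v₁ + (z-m₂)/v₂) * t
          + (-(m₁^2/(2*v₁)) - (z-m₂)^2/(2*v₂))) := by
  rw [mul_mul_mul_comm, ← Real.exp_add]
  congr 1
  field_simp
  ring

private lemma my_pdf_conv {v₁ v₂ : ℝ} (h₁ : 0 < v₁) (h₂ : 0 < v₂) (m₁ m₂ z : ℝ) :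
    ∫ t : ℝ, (√(2*π*v₁))⁻¹ * rexp (-(t-m₁)^2/(2*v₁)) *
        ((√(2*π*v₂))⁻¹ * rexp (-(z-t-m₂)^2/(2*v₂)))
      = (√(2*π*(v₁+v₂)))⁻¹ * rexp (-(z-(m₁+m₂))^2/(2*(v₁+v₂))) := by
  have hπ := Real.pi_pos
  set a := (v₁+v₂)/(2*v₁*v₂) with ha_def
  have ha : 0 < a := by positivity
  set b := m₁/v₁ + (z-m₂)/v₂ with hb_def
  set c := -(m₁^2/(2*v₁)) - (z-m₂)^2/(2*v₂) with hc_def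
  simp_rw [my_pdf_pt h₁ h₂ m₁ m₂ z, integral_const_mul]
  rw [my_integral_quadratic ha b c]
  have hE2 : b^2/(4*a)+c = -(z-(m₁+m₂))^2/(2*(v₁+v₂)) := by
    rw [ha_def, hb_def, hc_def]
    field_simp
    ring
  have hrad : π/a = (2*π*v₁) * ((2*π*v₂) / (2*π*(v₁+v₂))) := by
    rw [ha_def]; field_simp
  have hE1 : √(π/a) = √(2*π*v₁) * (√(2*π*v₂) / √(2*π*(v₁+v₂))) := by
    rw [hrad, Real.sqrt_mul (by positivity), Real.sqrt_div (by positivity)]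
  rw [hE2, hE1]
  have n1 : √(2*π*v₁) ≠ 0 := by positivity
  have n2 : √(2*π*v₂) ≠ 0 := by positivity
  have n3 : √(2*π*(v₁+v₂)) ≠ 0 := by positivity
  field_simp

private lemma my_pdf_conv_integrable {v₁ v₂ : ℝ} (h₁ : 0 < v₁) (h₂ : 0 < v₂) (m₁ m₂ z : ℝ) :
    Integrable (fun t : ℝ => (√(2*π*v₁))⁻¹ * rexp (-(t-m₁)^2/(2*v₁)) *
        ((√(2*π*v₂))⁻¹ * rexp (-(z-t-m₂)^2/(2*v₂)))) := by
  have ha : 0 < (v₁+v₂)/(2*v₁*v₂) := by positivity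
  simp_rw [my_pdf_pt h₁ h₂ m₁ m₂ z]
  exact (my_integrable_quadratic ha _ _).const_mul _

private lemma my_pdf_key (m₁ m₂ z : ℝ) {v₁ v₂ : ℝ≥0} (h₁ : v₁ ≠ 0) (h₂ : v₂ ≠ 0) :
    ∫⁻ t : ℝ, gaussianPDF m₁ v₁ t * gaussianPDF (m₂ + t) v₂ z
      = gaussianPDF (m₁ + m₂) (v₁ + v₂) z := by
  have hv₁ : (0:ℝ) < v₁ := by positivity
  have hv₂ : (0:ℝ) < v₂ := by positivity
  have hpt : ∀ t : ℝ, gaussianPDF m₁ v₁ t * gaussianPDF (m₂ + t) v₂ z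
      = ENNReal.ofReal (gaussianPDFReal m₁ v₁ t * gaussianPDFReal (m₂ + t) v₂ z) := by
    intro t
    rw [gaussianPDF, gaussianPDF, ← ENNReal.ofReal_mul (gaussianPDFReal_nonneg _ _ _)]
  have he : ∀ t : ℝ, gaussianPDFReal m₁ v₁ t * gaussianPDFReal (m₂ + t) v₂ z
      = (√(2*π*(v₁:ℝ)))⁻¹ * rexp (-(t-m₁)^2/(2*(v₁:ℝ))) *
        ((√(2*π*(v₂:ℝ)))⁻¹ * rexp (-(z-t-m₂)^2/(2*(v₂:ℝ)))) := by
    intro t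
    simp only [gaussianPDFReal]
    ring_nf
  simp_rw [hpt]
  rw [← ofReal_integral_eq_lintegral_ofReal]
  · congr 1
    simp_rw [he, my_pdf_conv hv₁ hv₂ m₁ m₂ z]
    simp only [gaussianPDFReal]
    push_cast
    ring_nf
  · simp_rw [he]
    exact my_pdf_conv_integrable hv₁ hv₂ m₁ m₂ z
  · exact ae_of_all _ fun t =>
      mul_nonneg (gaussianPDFReal_nonneg _ _ _) (gaussianPDFReal_nonneg _ _ _)

private lemma my_dirac_conv (a : ℝ) (ν : Measure ℝ) [SFinite ν] :
    Measure.conv (Measure.dirac a) ν = ν.map (a + ·) := by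
  rw [Measure.conv, Measure.dirac_prod, Measure.map_map (by fun_prop) (by fun_prop)]
  rfl

private lemma my_conv_dirac (a : ℝ) (ν : Measure ℝ) [SFinite ν] :
    Measure.conv ν (Measure.dirac a) = ν.map (· + a) := by
  rw [Measure.conv, Measure.prod_dirac, Measure.map_map (by fun_prop) (by fun_prop)]
  rfl

private lemma my_gaussianReal_conv (m₁ m₂ : ℝ) (v₁ v₂ : ℝ≥0) :
    Measure.conv (gaussianReal m₁ v₁) (gaussianReal m₂ v₂)
      = gaussianReal (m₁ + m₂) (v₁ + v₂) := by
  rcases eq_or_ne v₁ 0 with h1 | h1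
  · rw [h1, gaussianReal_zero_var, my_dirac_conv, gaussianReal_map_const_add, add_comm m₂ m₁,
      zero_add]
  rcases eq_or_ne v₂ 0 with h2 | h2
  · rw [h2, gaussianReal_zero_var, my_conv_dirac, gaussianReal_map_add_const, add_zero]
  have hv : v₁ + v₂ ≠ 0 := by simp [h1]
  have hmpdf : Measurable (fun p : ℝ × ℝ => gaussianPDF (m₂ + p.1) v₂ p.2) := by
    apply Measurable.ennreal_ofReal
    apply Continuous.measurable
    unfold gaussianPDFReal
    fun_prop
  ext s hs
  rw [Measure.conv, Measure.map_apply measurable_add hs,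
    Measure.prod_apply (measurable_add hs)]
  have hsec : ∀ t : ℝ, (Prod.mk t ⁻¹' ((fun p : ℝ × ℝ => p.1 + p.2) ⁻¹' s))
      = (t + ·) ⁻¹' s := fun t => rfl
  have hmap : ∀ t : ℝ, gaussianReal m₂ v₂ ((t + ·) ⁻¹' s) = gaussianReal (m₂ + t) v₂ s := by
    intro t
    rw [← gaussianReal_map_const_add t, Measure.map_apply (by fun_prop) hs]
  simp_rw [hsec, hmap, gaussianReal_apply _ h2 s,
    gaussianReal_of_var_ne_zero _ h1, gaussianReal_apply _ hv s]
  rw [lintegral_withDensity_eq_lintegral_mul _ (measurable_gaussianPDF _ _)]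
  swap
  · exact Measurable.lintegral_prod_right'
      (f := fun p : ℝ × ℝ => gaussianPDF (m₂ + p.1) v₂ p.2) hmpdf
  have heq : ∀ t : ℝ, gaussianPDF m₁ v₁ t * ∫⁻ z in s, gaussianPDF (m₂ + t) v₂ z
      = ∫⁻ z in s, gaussianPDF m₁ v₁ t * gaussianPDF (m₂ + t) v₂ z := by
    intro t
    rw [lintegral_const_mul' _ _ (by simp [gaussianPDF_def])]
  simp_rw [Pi.mul_apply, heq]
  rw [lintegral_lintegral_swap]
  · exact lintegral_congr fun z => my_pdf_key m₁ m₂ z h1 h2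
  · exact ((measurable_gaussianPDF m₁ v₁).comp measurable_fst |>.mul hmpdf).aemeasurable

private lemma my_indep_gaussian_add {Ω : Type*} [MeasurableSpace Ω] {P : Measure Ω}
    [IsProbabilityMeasure P] {X Y : Ω → ℝ} (hX : Measurable X) (hY : Measurable Y)
    (hXY : IndepFun X Y P) {m₁ m₂ : ℝ} {v₁ v₂ : ℝ≥0}
    (h1 : P.map X = gaussianReal m₁ v₁) (h2 : P.map Y = gaussianReal m₂ v₂) :
    P.map (fun ω => X ω + Y ω) = gaussianReal (m₁ + m₂) (v₁ + v₂) := by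
  have hpair : P.map (fun ω => (X ω, Y ω)) = (P.map X).prod (P.map Y) :=
    (indepFun_iff_map_prod_eq_prod_map_map hX.aemeasurable hY.aemeasurable).mp hXY
  have hc : (fun ω => X ω + Y ω) = (fun p : ℝ × ℝ => p.1 + p.2) ∘ (fun ω => (X ω, Y ω)) := rfl
  rw [hc, ← Measure.map_map measurable_add (hX.prodMk hY), hpair, h1, h2,
    ← Measure.conv, my_gaussianReal_conv]

private lemma my_mk_sq (c : ℝ) : (⟨c^2, sq_nonneg c⟩ : ℝ≥0) = (c^2).toNNReal :=
  NNReal.coe_injective (by simp [Real.coe_toNNReal _ (sq_nonneg c)]; rfl)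

/-- in the IR-SV model, for every `j ≥ 1` and `m ≥ 0`, writing
`ℓ = ∑_{i=j+1}^{j+m} g i`, the law of `h j + h (j+m)` is the Gaussian distribution
`N(2μ, 2σ²(1 + φ^ℓ)/(1 - φ²))`. -/
theorem irsv_sum_logvol_gaussian_law
    {Ω : Type*} [MeasurableSpace Ω] (P : Measure Ω) [IsProbabilityMeasure P]
    (μ σ φ : ℝ) (hσ : 0 < σ) (hφ0 : 0 < φ) (hφ1 : φ < 1)
    (g : ℕ → ℝ) (hg : ∀ j, 2 ≤ j → 0 < g j)
    (η : ℕ → Ω → ℝ) (hmeas : ∀ j, Measurable (η j))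
    (hindep : iIndepFun η P)
    (hlaw1 : Measure.map (η 1) P = gaussianReal 0 (σ ^ 2 / (1 - φ ^ 2)).toNNReal)
    (hlawj : ∀ j, 2 ≤ j → Measure.map (η j) P
      = gaussianReal 0 (σ ^ 2 * (1 - φ ^ (2 * g j)) / (1 - φ ^ 2)).toNNReal)
    (x : ℕ → Ω → ℝ) (hx1 : x 1 = η 1)
    (hxrec : ∀ j, 2 ≤ j → x j = fun ω => φ ^ (g j) * x (j - 1) ω + η j ω)
    (h : ℕ → Ω → ℝ) (hh : ∀ j, h j = fun ω => μ + x j ω) :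
    ∀ j, 1 ≤ j → ∀ m : ℕ,
      Measure.map (fun ω => h j ω + h (j + m) ω) P
        = gaussianReal (2 * μ)
            (2 * σ ^ 2 * (1 + φ ^ (∑ i ∈ Finset.Icc (j + 1) (j + m), g i))
              / (1 - φ ^ 2)).toNNReal := by
  have hφ2 : (0:ℝ) < 1 - φ ^ 2 := by nlinarith
  -- measurability of x
  have hxmeas : ∀ n, 1 ≤ n → Measurable (x n) := by
    intro n hn
    induction n, hn using Nat.le_induction with
    | base => rw [hx1]; exact hmeas 1
    | succ n hn ih =>
      rw [hxrec (n+1) (by omega)]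
      simp only [Nat.add_sub_cancel]
      exact (ih.const_mul _).add (hmeas (n+1))
  -- factorization of x n through the first N noises
  have hfact : ∀ n, 1 ≤ n → ∀ N, n ≤ N → ∃ F : ((Finset.Icc 1 N : Finset ℕ) → ℝ) → ℝ,
      Measurable F ∧ x n = fun ω => F (fun i => η i ω) := by
    intro n hn
    induction n, hn using Nat.le_induction with
    | base =>
      intro N hN
      exact ⟨fun y => y ⟨1, by simp [Finset.mem_Icc]; omega⟩, measurable_pi_apply _,
        by rw [hx1]⟩
    | succ n hn ih =>
      intro N hN
      obtain ⟨F, hF, hxF⟩ := ih N (by omega)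
      refine ⟨fun y => φ ^ (g (n+1)) * F y + y ⟨n+1, by simp [Finset.mem_Icc]; omega⟩,
        (hF.const_mul _).add (measurable_pi_apply _), ?_⟩
      rw [hxrec (n+1) (by omega)]
      simp only [Nat.add_sub_cancel]
      rw [hxF]
  -- independence of combinations of x's from future noise
  have hindep2 : ∀ (a b : ℝ) (j n k : ℕ), 1 ≤ j → j ≤ n → n < k →
      IndepFun (fun ω => a * x j ω + b * x n ω) (η k) P := by
    intro a b j n k hj hjn hnk
    obtain ⟨F, hF, hxF⟩ := hfact j hj n hjn
    obtain ⟨G, hG, hxG⟩ := hfact n (le_trans hj hjn) n le_rfl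
    have hbase := hindep.indepFun_finset (Finset.Icc 1 n) {k}
      (by simp only [Finset.disjoint_singleton_right, Finset.mem_Icc]; omega) hmeas
    have hcomp := hbase.comp (φ := fun y => a * F y + b * G y)
      (ψ := fun y : (({k} : Finset ℕ) : Finset ℕ) → ℝ => y ⟨k, Finset.mem_singleton_self k⟩)
      ((hF.const_mul a).add (hG.const_mul b)) (measurable_pi_apply (X := fun _ => ℝ) _)
    have he1 : (fun ω => a * x j ω + b * x n ω)
        = (fun y => a * F y + b * G y) ∘ (fun ω (i : (Finset.Icc 1 n : Finset ℕ)) => η i ω) := by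
      rw [hxF, hxG]; rfl
    rw [he1]
    exact hcomp
  have hsingle : ∀ n k, 1 ≤ n → n < k → IndepFun (x n) (η k) P := by
    intro n k hn hnk
    obtain ⟨G, hG, hxG⟩ := hfact n hn n le_rfl
    have hbase := hindep.indepFun_finset (Finset.Icc 1 n) {k}
      (by simp only [Finset.disjoint_singleton_right, Finset.mem_Icc]; omega) hmeas
    have hcomp := hbase.comp (φ := G)
      (ψ := fun y : (({k} : Finset ℕ) : Finset ℕ) → ℝ => y ⟨k, Finset.mem_singleton_self k⟩)
      hG (measurable_pi_apply (X := fun _ => ℝ) _)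
    rw [hxG]
    exact hcomp
  -- law of x n
  have hlawx : ∀ n, 1 ≤ n → P.map (x n) = gaussianReal 0 (σ ^ 2 / (1 - φ ^ 2)).toNNReal := by
    intro n hn
    induction n, hn using Nat.le_induction with
    | base => rw [hx1]; exact hlaw1
    | succ n hn ih =>
      have hrec : x (n+1) = fun ω => φ ^ (g (n+1)) * x n ω + η (n+1) ω := by
        rw [hxrec (n+1) (by omega)]; simp only [Nat.add_sub_cancel]
      have hXm : Measurable fun ω => φ ^ (g (n+1)) * x n ω := (hxmeas n hn).const_mul _
      have hXlaw : P.map (fun ω => φ ^ (g (n+1)) * x n ω)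
          = gaussianReal 0 (⟨(φ ^ (g (n+1)))^2, sq_nonneg _⟩ * (σ ^ 2 / (1 - φ ^ 2)).toNNReal) := by
        have hc : (fun ω => φ ^ (g (n+1)) * x n ω) = (φ ^ (g (n+1)) * ·) ∘ x n := rfl
        rw [hc, ← Measure.map_map (measurable_const_mul _) (hxmeas n hn), ih,
          gaussianReal_map_const_mul, mul_zero]
        rfl
      have hind : IndepFun (fun ω => φ ^ (g (n+1)) * x n ω) (η (n+1)) P :=
        (hsingle n (n+1) hn (by omega)).comp (measurable_const_mul _) measurable_id
      rw [hrec, my_indep_gaussian_add hXm (hmeas (n+1)) hind hXlaw (hlawj (n+1) (by omega)),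
        add_zero]
      congr 1
      rw [my_mk_sq, ← Real.toNNReal_mul (sq_nonneg _),
        ← Real.toNNReal_add (by positivity) ?h2]
      case h2 =>
        have : φ ^ (2 * g (n+1)) ≤ 1 :=
          Real.rpow_le_one hφ0.le hφ1.le (by have := hg (n+1) (by omega); linarith)
        have h0 : (0:ℝ) ≤ σ ^ 2 * (1 - φ ^ (2 * g (n+1))) := by nlinarith
        positivity
      congr 1
      have hsq : (φ ^ (g (n+1)))^2 = φ ^ (2 * g (n+1)) := by
        rw [two_mul, Real.rpow_add hφ0]; ring
      rw [hsq]
      field_simp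
      ring
  -- main induction: law of a * x j + b * x (j+m)
  have main : ∀ j, 1 ≤ j → ∀ m : ℕ, ∀ a b : ℝ,
      P.map (fun ω => a * x j ω + b * x (j+m) ω)
        = gaussianReal 0 ((σ ^ 2 / (1 - φ ^ 2)) *
            (a^2 + b^2 + 2*a*b*(φ ^ (∑ i ∈ Finset.Icc (j + 1) (j + m), g i)))).toNNReal := by
    intro j hj m
    induction m with
    | zero =>
      intro a b
      have hsum : ∑ i ∈ Finset.Icc (j+1) (j+0), g i = 0 := by
        rw [Finset.Icc_eq_empty (by omega)]; exact Finset.sum_empty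
      rw [hsum, Real.rpow_zero]
      have hx0 : (fun ω => a * x j ω + b * x (j+0) ω) = ((a+b) * ·) ∘ x j := by
        funext ω; show a * x j ω + b * x (j+0) ω = (a+b) * x j ω
        have : j + 0 = j := rfl
        rw [this]; ring
      rw [hx0, ← Measure.map_map (measurable_const_mul _) (hxmeas j hj), hlawx j hj,
        gaussianReal_map_const_mul, mul_zero]
      congr 1
      rw [show NNReal.mk ((a+b)^2) (sq_nonneg _) = ((a+b)^2).toNNReal from my_mk_sq _,
        ← Real.toNNReal_mul (sq_nonneg _)]
      congr 1
      ring
    | succ m ih =>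
      intro a b
      have hℓ0 : 0 ≤ ∑ i ∈ Finset.Icc (j + 1) (j + m), g i :=
        Finset.sum_nonneg fun i hi => by
          rw [Finset.mem_Icc] at hi; exact (hg i (by omega)).le
      have hG0 : 0 < g (j+m+1) := hg _ (by omega)
      have hrec : x (j+m+1) = fun ω => φ ^ (g (j+m+1)) * x (j+m) ω + η (j+m+1) ω := by
        rw [hxrec (j+m+1) (by omega)]; simp only [Nat.add_sub_cancel]
      have hfun : (fun ω => a * x j ω + b * x (j+(m+1)) ω)
          = fun ω => (a * x j ω + (b * φ ^ (g (j+m+1))) * x (j+m) ω) + b * η (j+m+1) ω := by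
        funext ω
        have hjm : j + (m+1) = j + m + 1 := rfl
        rw [hjm, hrec]; ring
      have hZm : Measurable (fun ω => a * x j ω + (b * φ ^ (g (j+m+1))) * x (j+m) ω) :=
        ((hxmeas j hj).const_mul a).add ((hxmeas (j+m) (by omega)).const_mul _)
      have hYlaw : P.map (fun ω => b * η (j+m+1) ω)
          = gaussianReal 0 (⟨b^2, sq_nonneg b⟩ *
              (σ ^ 2 * (1 - φ ^ (2 * g (j+m+1))) / (1 - φ ^ 2)).toNNReal) := by
        have hc : (fun ω => b * η (j+m+1) ω) = (b * ·) ∘ η (j+m+1) := rfl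
        rw [hc, ← Measure.map_map (measurable_const_mul _) (hmeas _), hlawj _ (by omega),
          gaussianReal_map_const_mul, mul_zero]
        rfl
      have hind : IndepFun (fun ω => a * x j ω + (b * φ ^ (g (j+m+1))) * x (j+m) ω)
          (fun ω => b * η (j+m+1) ω) P :=
        (hindep2 a (b * φ ^ (g (j+m+1))) j (j+m) (j+m+1) hj (by omega) (by omega)).comp
          measurable_id (measurable_const_mul b)
      rw [hfun, my_indep_gaussian_add hZm ((hmeas _).const_mul b) hind
        (ih a (b * φ ^ (g (j+m+1)))) hYlaw, add_zero]
      congr 1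
      -- variance arithmetic
      have hφℓ1 : φ ^ (∑ i ∈ Finset.Icc (j + 1) (j + m), g i) ≤ 1 :=
        Real.rpow_le_one hφ0.le hφ1.le hℓ0
      have hφℓ0 : 0 ≤ φ ^ (∑ i ∈ Finset.Icc (j + 1) (j + m), g i) :=
        (Real.rpow_pos_of_pos hφ0 _).le
      have hQ : (0:ℝ) ≤ a^2 + (b * φ ^ (g (j+m+1)))^2
          + 2*a*(b * φ ^ (g (j+m+1)))*(φ ^ (∑ i ∈ Finset.Icc (j + 1) (j + m), g i)) := by
        set c := b * φ ^ (g (j+m+1))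
        set t := φ ^ (∑ i ∈ Finset.Icc (j + 1) (j + m), g i)
        nlinarith [mul_nonneg hφℓ0 (sq_nonneg (a+c)),
          mul_nonneg (sub_nonneg.mpr hφℓ1) (add_nonneg (sq_nonneg a) (sq_nonneg c))]
      have h2G1 : φ ^ (2 * g (j+m+1)) ≤ 1 :=
        Real.rpow_le_one hφ0.le hφ1.le (by linarith)
      rw [my_mk_sq, ← Real.toNNReal_mul (sq_nonneg _),
        ← Real.toNNReal_add (by positivity)
          (by have h0 : (0:ℝ) ≤ σ ^ 2 * (1 - φ ^ (2 * g (j+m+1))) := by nlinarith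
              positivity)]
      congr 1
      have hsum : ∑ i ∈ Finset.Icc (j + 1) (j + (m+1)), g i
          = (∑ i ∈ Finset.Icc (j + 1) (j + m), g i) + g (j+m+1) := by
        rw [show j + (m+1) = (j+m)+1 from rfl, Finset.sum_Icc_succ_top (by omega)]
      have hsq2 : φ ^ (2 * g (j+m+1)) = φ ^ (g (j+m+1)) * φ ^ (g (j+m+1)) := by
        rw [two_mul, Real.rpow_add hφ0]
      rw [hsum, Real.rpow_add hφ0, hsq2]
      field_simp
      ring
  -- conclusion
  intro j hj m
  have A := main j hj m 1 1
  have hfin : (fun ω => h j ω + h (j+m) ω)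
      = (· + 2*μ) ∘ (fun ω => 1 * x j ω + 1 * x (j+m) ω) := by
    funext ω
    simp only [hh, Function.comp_apply]
    ring
  rw [hfin, ← Measure.map_map (f := fun ω => 1 * x j ω + 1 * x (j+m) ω) (measurable_add_const _)
      (((hxmeas j hj).const_mul 1).add ((hxmeas (j+m) (by omega)).const_mul 1)), A,
    gaussianReal_map_add_const, zero_add]
  congr 1
  congr 1
  field_simp
  ring
end

section
/- Let 0 < α < 1, let C > 0, and let g_2, g_3, … be positive real gap times (real powers α^x = exp(x·log α)). On a probability space, let x_1 be a square-integrable random variable with E[x_1] = 0 and Var(x_1) = C, and for j ≥ 2 let η_j be square-integrable random variables with E[η_j] = 0 and Var(η_j) = C(1 − α^{2 g_j}), such that the η_j are pairwise uncorrelated, each η_j is uncorrelated with x_1, and η_j is uncorrelated with η_k for k ≠ j. Define x_j = α^{g_j} x_{j−1} + η_j for j ≥ 2. Then for every j ≥ 1, Var(x_j) = C, and for every j ≥ 1 and m ≥ 0, writing ℓ = Σ_{i=j+1}^{j+m} g_i, Cov(x_j, x_{j+m}) = C·α^{ℓ}; hence (x_j) is a weakly (second-order) stationary process. -/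
open MeasureTheory ProbabilityTheory Real Finset

section Aux

variable {Ω : Type*} [MeasurableSpace Ω] {P : Measure Ω} [IsProbabilityMeasure P]

lemma aux_integrable_mul {f g : Ω → ℝ} (hf : MemLp f 2 P) (hg : MemLp g 2 P) :
    Integrable (fun ω => f ω * g ω) P := by
  rw [← memLp_one_iff_integrable]
  exact MemLp.smul (φ := f) (f := g) (r := 1) hg hf

lemma cov_comm (X Y : Ω → ℝ) : cov P X Y = cov P Y X := by
  unfold cov; simp_rw [mul_comm]

lemma cov_lin_left (a : ℝ) {X Y Z : Ω → ℝ} (hX : MemLp X 2 P) (hY : MemLp Y 2 P)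
    (hZ : MemLp Z 2 P) :
    cov P (fun ω => a * X ω + Y ω) Z = a * cov P X Z + cov P Y Z := by
  have hXi := hX.integrable one_le_two
  have hYi := hY.integrable one_le_two
  have hmean : ∫ ω, (a * X ω + Y ω) ∂P = a * ∫ a, X a ∂P + ∫ a, Y a ∂P := by
    rw [integral_add (hXi.const_mul a) hYi, integral_const_mul]
  have h1 : Integrable (fun ω => (X ω - ∫ a, X a ∂P) * (Z ω - ∫ a, Z a ∂P)) P :=
    aux_integrable_mul (hX.sub (memLp_const _)) (hZ.sub (memLp_const _))
  have h2 : Integrable (fun ω => (Y ω - ∫ a, Y a ∂P) * (Z ω - ∫ a, Z a ∂P)) P :=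
    aux_integrable_mul (hY.sub (memLp_const _)) (hZ.sub (memLp_const _))
  unfold cov
  rw [hmean]
  calc ∫ ω, (a * X ω + Y ω - (a * ∫ a, X a ∂P + ∫ a, Y a ∂P)) * (Z ω - ∫ a, Z a ∂P) ∂P
      = ∫ ω, (a * ((X ω - ∫ a, X a ∂P) * (Z ω - ∫ a, Z a ∂P))
          + (Y ω - ∫ a, Y a ∂P) * (Z ω - ∫ a, Z a ∂P)) ∂P := by
        congr 1; funext ω; ring
    _ = a * cov P X Z + cov P Y Z := by
        rw [integral_add (h1.const_mul a) h2, integral_const_mul]; rfl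

lemma cov_lin_right (a : ℝ) {X Y Z : Ω → ℝ} (hX : MemLp X 2 P) (hY : MemLp Y 2 P)
    (hZ : MemLp Z 2 P) :
    cov P Z (fun ω => a * X ω + Y ω) = a * cov P Z X + cov P Z Y := by
  rw [cov_comm, cov_lin_left a hX hY hZ, cov_comm X Z, cov_comm Y Z]

lemma variance_eq_cov {X : Ω → ℝ} (hX : MemLp X 2 P) : variance X P = cov P X X := by
  rw [variance_eq_integral hX.aestronglyMeasurable.aemeasurable]
  unfold cov
  congr 1
  funext ω
  simp [sq]

end Aux

/-- second-order stationarity for the gap-time AR recursion, the content of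
the IR-ARCH(1) stationarity proposition: let `0 < α < 1`, `C > 0`, positive gap times
`g j` for `j ≥ 2`, `x 1` square-integrable with mean `0` and variance `C`, and for `j ≥ 2`
square-integrable `η j` with mean `0`, variance `C(1 - α^{2 g j})`, pairwise uncorrelated and
uncorrelated with `x 1`. Define `x j = α^{g j} x (j-1) + η j` for `j ≥ 2`. Then
`Var(x j) = C` for all `j ≥ 1`, and for all `j ≥ 1`, `m ≥ 0`, with
`ℓ = ∑_{i=j+1}^{j+m} g i`, `Cov(x j, x (j+m)) = C·α^ℓ`; hence `(x j)` is weakly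
stationary. -/
theorem irarch_gap_time_ar_weak_stationarity
    {Ω : Type*} [MeasurableSpace Ω] (P : Measure Ω) [IsProbabilityMeasure P]
    (α C : ℝ) (hα0 : 0 < α) (hα1 : α < 1) (hC : 0 < C)
    (g : ℕ → ℝ) (hg : ∀ j, 2 ≤ j → 0 < g j)
    (x η : ℕ → Ω → ℝ)
    (hx1L2 : MemLp (x 1) 2 P)
    (hx1mean : ∫ ω, x 1 ω ∂P = 0)
    (hx1var : variance (x 1) P = C)
    (hηL2 : ∀ j, 2 ≤ j → MemLp (η j) 2 P)
    (hηmean : ∀ j, 2 ≤ j → ∫ ω, η j ω ∂P = 0)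
    (hηvar : ∀ j, 2 ≤ j → variance (η j) P = C * (1 - α ^ (2 * g j)))
    (hηuncorr : ∀ j k, 2 ≤ j → 2 ≤ k → j ≠ k → cov P (η j) (η k) = 0)
    (hx1uncorr : ∀ j, 2 ≤ j → cov P (x 1) (η j) = 0)
    (hxrec : ∀ j, 2 ≤ j → x j = fun ω => α ^ (g j) * x (j - 1) ω + η j ω) :
    (∀ j, 1 ≤ j → variance (x j) P = C)
    ∧ (∀ j, 1 ≤ j → ∀ m : ℕ,
        cov P (x j) (x (j + m)) = C * α ^ (∑ i ∈ Finset.Icc (j + 1) (j + m), g i)) := by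
  have key : ∀ j, 1 ≤ j → MemLp (x j) 2 P ∧ (∫ ω, x j ω ∂P = 0)
      ∧ cov P (x j) (x j) = C ∧ (∀ k, j < k → cov P (x j) (η k) = 0) := by
    intro j hj
    induction j, hj using Nat.le_induction with
    | base =>
      refine ⟨hx1L2, hx1mean, ?_, fun k hk => hx1uncorr k hk⟩
      rw [← variance_eq_cov hx1L2]; exact hx1var
    | succ j hj ih =>
      obtain ⟨hL2, hmean, hvar, hunc⟩ := ih
      have h2 : 2 ≤ j + 1 := by omega
      have hrec := hxrec (j + 1) h2
      simp only [Nat.add_sub_cancel] at hrec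
      set a := α ^ (g (j + 1)) with ha
      have hηL := hηL2 (j + 1) h2
      have hxL2' : MemLp (x (j + 1)) 2 P := by
        rw [hrec]; exact (hL2.const_mul a).add hηL
      have haa : a * a = α ^ (2 * g (j + 1)) := by
        rw [ha, ← Real.rpow_add hα0, two_mul]
      refine ⟨hxL2', ?_, ?_, ?_⟩
      · rw [hrec, integral_add ((hL2.integrable one_le_two).const_mul a)
          (hηL.integrable one_le_two), integral_const_mul, hmean, hηmean _ h2]
        ring
      · have hF : MemLp (fun ω => a * x j ω + η (j + 1) ω) 2 P :=
          (hL2.const_mul a).add hηL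
        rw [hrec, cov_lin_left a hL2 hηL hF, cov_lin_right a hL2 hηL hL2,
          cov_lin_right a hL2 hηL hηL]
        rw [hvar, hunc (j + 1) (by omega), cov_comm (η (j + 1)) (x j),
          hunc (j + 1) (by omega), ← variance_eq_cov hηL, hηvar _ h2, ← haa]
        ring
      · intro k hk
        rw [hrec, cov_lin_left a hL2 hηL (hηL2 k (by omega)),
          hunc k (by omega), hηuncorr (j + 1) k h2 (by omega) (by omega)]
        ring
  refine ⟨fun j hj => by rw [variance_eq_cov (key j hj).1]; exact (key j hj).2.2.1,
    fun j hj m => ?_⟩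
  induction m with
  | zero =>
    have hemp : Finset.Icc (j + 1) j = (∅ : Finset ℕ) := Finset.Icc_eq_empty (by omega)
    simp only [Nat.add_zero]
    rw [hemp, Finset.sum_empty, Real.rpow_zero, mul_one]
    exact (key j hj).2.2.1
  | succ m ih =>
    have h2 : 2 ≤ j + m + 1 := by omega
    have hrec := hxrec (j + m + 1) h2
    simp only [Nat.add_sub_cancel] at hrec
    have hXm : MemLp (x (j + m)) 2 P := (key (j + m) (by omega)).1
    have hstep : cov P (x j) (x (j + (m + 1)))
        = α ^ (g (j + m + 1)) * cov P (x j) (x (j + m)) + cov P (x j) (η (j + m + 1)) := by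
      show cov P (x j) (x (j + m + 1)) = _
      rw [hrec]
      exact cov_lin_right _ hXm (hηL2 _ h2) (key j hj).1
    have hsum : ∑ i ∈ Finset.Icc (j + 1) (j + (m + 1)), g i
        = (∑ i ∈ Finset.Icc (j + 1) (j + m), g i) + g (j + m + 1) := by
      rw [← Nat.add_assoc]
      exact Finset.sum_Icc_succ_top (by omega) _
    rw [hstep, ih, (key j hj).2.2.2 (j + m + 1) (by omega), hsum, Real.rpow_add hα0]
    ring
end
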